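/- Suppose k ≥ 2 and k < m < 2k, and n > k. In any fault-free tiling of an m×n rectangle by k×1 tiles, the first column contains exactly one vertical tile. -/
import Mathlib


/-- The cells of an `m × n` rectangle: `(row, column)` with `row < m`, `column < n`. -/
def grid (m n : ℕ) : Finset (ℕ × ℕ) := Finset.range m ×ˢ Finset.range n

/-- A horizontal `k × 1` tile: `k` consecutive cells in one row. -/
def IsHTile (k : ℕ) (t : Finset (ℕ × ℕ)) : Prop :=
  ∃ i j : ℕ, t = (Finset.range k).image fun s => (i, j + s)

/-- A vertical `k × 1` tile: `k` consecutive cells in one column. -/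
def IsVTile (k : ℕ) (t : Finset (ℕ × ℕ)) : Prop :=
  ∃ i j : ℕ, t = (Finset.range k).image fun s => (i + s, j)

/-- A tiling of the `m × n` rectangle by `k × 1` tiles. -/
def IsTiling (m n k : ℕ) (T : Finset (Finset (ℕ × ℕ))) : Prop :=
  (∀ t ∈ T, IsHTile k t ∨ IsVTile k t) ∧
  (T : Set (Finset (ℕ × ℕ))).PairwiseDisjoint id ∧
  T.biUnion id = grid m n

/-- The number of tilings of the `m × n` rectangle by `k × 1` tiles. -/
noncomputable def numTilings (m n k : ℕ) : ℕ :=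
  Nat.card {T : Finset (Finset (ℕ × ℕ)) // IsTiling m n k T}

/-- The tiling `T` has a fault at `x = a`: every tile lies entirely in
columns `< a` or entirely in columns `≥ a`. -/
def HasFaultAt (T : Finset (Finset (ℕ × ℕ))) (a : ℕ) : Prop :=
  ∀ t ∈ T, (∀ c ∈ t, c.2 < a) ∨ (∀ c ∈ t, a ≤ c.2)

/-- A tiling of a rectangle with `n` columns is fault-free. -/
def FaultFree (n : ℕ) (T : Finset (Finset (ℕ × ℕ))) : Prop :=
  ∀ a : ℕ, 0 < a → a < n → ¬ HasFaultAt T a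

/-- The number of fault-free tilings of the `m × n` rectangle by `k × 1` tiles. -/
noncomputable def numFFTilings (m n k : ℕ) : ℕ :=
  Nat.card {T : Finset (Finset (ℕ × ℕ)) // IsTiling m n k T ∧ FaultFree n T}

theorem stmt_6 (k m n : ℕ) (hk : 2 ≤ k) (h1 : k < m) (h2 : m < 2 * k) (hn : k < n)
    (T : Finset (Finset (ℕ × ℕ))) (hT : IsTiling m n k T) (hff : FaultFree n T) :
    ∃! t : Finset (ℕ × ℕ), t ∈ T ∧
      ∃ i : ℕ, t = (Finset.range k).image fun s => (i + s, 0) := by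
  obtain ⟨htype, hdisj, hcover⟩ := hT
  have hsub : ∀ t ∈ T, ∀ c ∈ t, c.1 < m ∧ c.2 < n := by
    intro t ht c hc
    have h : c ∈ T.biUnion id := Finset.mem_biUnion.mpr ⟨t, ht, hc⟩
    rw [hcover] at h
    simpa [grid, Finset.mem_product] using h
  have hex : ∃ t, t ∈ T ∧ ∃ i : ℕ, t = (Finset.range k).image fun s => (i + s, 0) := by
    by_contra hno
    push_neg at hno
    have hrow : ∀ r, r < m → ((Finset.range k).image fun s => (r, s)) ∈ T := by
      intro r hr
      have hc : ((r, 0) : ℕ × ℕ) ∈ grid m n := by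
        simp [grid, Finset.mem_product]; omega
      rw [← hcover] at hc
      obtain ⟨t, ht, hct⟩ := Finset.mem_biUnion.mp hc
      rcases htype t ht with ⟨i, j, rfl⟩ | ⟨i, j, rfl⟩
      · simp only [id_eq, Finset.mem_image, Finset.mem_range, Prod.mk.injEq] at hct
        obtain ⟨s, hs, hi, hj⟩ := hct
        have hj0 : j = 0 := by omega
        subst hi; subst hj0
        simpa using ht
      · exfalso
        simp only [id_eq, Finset.mem_image, Finset.mem_range, Prod.mk.injEq] at hct
        obtain ⟨s, hs, hi, hj⟩ := hct
        subst hj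
        exact hno _ ht i rfl
    apply hff k (by omega) hn
    intro t ht
    by_cases hc : ∃ c ∈ t, c.2 < k
    · left
      obtain ⟨c, hct, hck⟩ := hc
      have hr : c.1 < m := (hsub t ht c hct).1
      have htr := hrow c.1 hr
      have hmem : c ∈ (Finset.range k).image fun s => (c.1, s) := by
        refine Finset.mem_image.mpr ⟨c.2, Finset.mem_range.mpr hck, ?_⟩
        simp
      have heq : t = (Finset.range k).image fun s => (c.1, s) := by
        by_contra hne
        have hd := hdisj ht htr hne
        exact Finset.disjoint_left.mp hd hct hmem
      subst heq
      intro c' hc'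
      simp only [Finset.mem_image, Finset.mem_range] at hc'
      obtain ⟨s, hs, rfl⟩ := hc'
      exact hs
    · right
      push_neg at hc
      exact hc
  obtain ⟨t, ht, i, hti⟩ := hex
  refine ⟨t, ⟨ht, i, hti⟩, ?_⟩
  rintro y ⟨hy, i', rfl⟩
  by_contra hne
  have hd := hdisj hy ht hne
  have hinj : ∀ a : ℕ, Function.Injective fun s : ℕ => (a + s, (0:ℕ)) := by
    intro a s1 s2 h
    simpa using (by omega : a + s1 = a + s2 → s1 = s2)
      (congrArg Prod.fst h)
  have hcard : ∀ a : ℕ, ((Finset.range k).image fun s => (a + s, 0)).card = k := by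
    intro a
    rw [Finset.card_image_of_injective _ (hinj a), Finset.card_range]
  have hsubset : ∀ a : ℕ, ((Finset.range k).image fun s => (a + s, 0)) ∈ T →
      ((Finset.range k).image fun s => (a + s, (0:ℕ))) ⊆ Finset.range m ×ˢ ({0} : Finset ℕ) := by
    intro a hat c hc
    have h1 := hsub _ hat c hc
    simp only [Finset.mem_image, Finset.mem_range] at hc
    obtain ⟨s, hs, rfl⟩ := hc
    simp [Finset.mem_product]
    omega
  subst hti
  have hu : (((Finset.range k).image fun s => (i' + s, (0:ℕ))) ∪
      ((Finset.range k).image fun s => (i + s, 0))).card ≤ m := by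
    calc _ ≤ (Finset.range m ×ˢ ({0} : Finset ℕ)).card :=
          Finset.card_le_card (Finset.union_subset (hsubset i' hy) (hsubset i ht))
      _ = m := by simp
  simp only [Function.onFun, id_eq] at hd
  rw [Finset.card_union_of_disjoint hd, hcard, hcard] at hu
  omega
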